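/- Let n ≥ 2 and let p_1, …, p_{n+1} be integers with 2 ≤ p_1 ≤ ⋯ ≤ p_n ≤ p_{n+1}, and set q = p_1⋯p_n − (p_1 + ⋯ + p_n) + n. If p_{n+1} is a typical rank of format (p_1, …, p_{n+1}) over ℝ, then q ≤ p_{n+1} ≤ p_1⋯p_n. -/

import Mathlib

open MeasureTheory

noncomputable section

/-- The rank-one tensor `a₁ ⊗ ⋯ ⊗ aₙ`. -/
def rankOneTensor {n : ℕ} (p : Fin n → ℕ) (a : ∀ i, Fin (p i) → ℝ) :
    (∀ i, Fin (p i)) → ℝ :=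
  fun k => ∏ i, a i (k i)

/-- The rank of a tensor: the least `r` such that `T` is a sum of `r` rank-one tensors. -/
def tensorRank {n : ℕ} (p : Fin n → ℕ) (T : (∀ i, Fin (p i)) → ℝ) : ℕ :=
  sInf {r | ∃ a : Fin r → ∀ i, Fin (p i) → ℝ, T = ∑ h, rankOneTensor p (a h)}

/-- `r` is a typical rank of format `p` over `ℝ`: the set of tensors of rank exactly `r`
has positive Lebesgue measure. -/
def IsTypicalRank {n : ℕ} (p : Fin n → ℕ) (r : ℕ) : Prop :=
  0 < volume {T : (∀ i, Fin (p i)) → ℝ | tensorRank p T = r}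

/-! ### Auxiliary lemmas -/

/-- The range of a `C¹` map from a space of dimension smaller than that of the target
is Lebesgue-null. -/
lemma null_range_of_contDiff {D : Type*} [NormedAddCommGroup D] [NormedSpace ℝ D]
    [FiniteDimensional ℝ D] {K : Type*} [Fintype K]
    (hd : Module.finrank ℝ D < Fintype.card K)
    {f : D → (K → ℝ)} (hf : ContDiff ℝ 1 f) :
    volume (Set.range f) = 0 := by
  classical
  set d := Module.finrank ℝ D with hdd
  let π₁ : (K → ℝ) →ₗ[ℝ] (Fin (Fintype.card K) → ℝ) :=
    LinearMap.funLeft ℝ ℝ (Fintype.equivFin K).symm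
  let π₂ : (Fin (Fintype.card K) → ℝ) →ₗ[ℝ] (Fin d → ℝ) :=
    LinearMap.funLeft ℝ ℝ (Fin.castLE hd.le)
  let π₃ : (Fin d → ℝ) →ₗ[ℝ] D := (Module.finBasis ℝ D).equivFun.symm.toLinearMap
  let π : (K → ℝ) →ₗ[ℝ] D := π₃ ∘ₗ π₂ ∘ₗ π₁
  have hπs : Function.Surjective π := by
    have hcoe : ⇑π = ⇑π₃ ∘ ⇑π₂ ∘ ⇑π₁ := rfl
    show Function.Surjective ⇑π
    rw [hcoe]
    exact ((Module.finBasis ℝ D).equivFun.symm.surjective).comp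
      ((LinearMap.funLeft_surjective_of_injective ℝ ℝ _ (Fin.castLE_injective hd.le)).comp
        (LinearMap.funLeft_surjective_of_injective ℝ ℝ _ (Equiv.injective _)))
  have hπni : ¬ Function.Injective π := by
    intro hinj
    have := LinearMap.finrank_le_finrank_of_injective hinj
    rw [Module.finrank_pi] at this
    omega
  obtain ⟨x, y, hxy, hne⟩ : ∃ x y, π x = π y ∧ x ≠ y :=
    Function.not_injective_iff.1 hπni
  set v := x - y with hv
  have hv0 : v ≠ 0 := sub_ne_zero.2 hne
  have hπv : π v = 0 := by rw [hv, map_sub, hxy, sub_self]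
  let πL : (K → ℝ) →L[ℝ] D := π.toContinuousLinearMap
  set g : (K → ℝ) → (K → ℝ) := f ∘ πL with hg
  have hrange : Set.range f = g '' Set.univ := by
    rw [Set.image_univ, hg, Set.range_comp]
    rw [show Set.range ⇑πL = Set.range ⇑π from rfl, Set.range_eq_univ.2 hπs, Set.image_univ]
  rw [hrange]
  have hdf : Differentiable ℝ f := hf.differentiable one_ne_zero
  apply addHaar_image_eq_zero_of_det_fderivWithin_eq_zero volume
    (f' := fun x => (fderiv ℝ f (πL x)).comp πL)
  · intro x _
    exact (((hdf (πL x)).hasFDerivAt).comp x πL.hasFDerivAt).hasFDerivWithinAt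
  · intro x _
    by_contra hdet
    let e := LinearMap.equivOfDetNeZero _ hdet
    have he : (e : (K → ℝ) →ₗ[ℝ] (K → ℝ)) =
        ((fderiv ℝ f (πL x)).comp πL : (K → ℝ) →L[ℝ] (K → ℝ)).toLinearMap :=
      LinearEquiv.coe_ofIsUnitDet _
    have : e v = e 0 := by
      have h1 : e v = (fderiv ℝ f (πL x)) (πL v) := by
        rw [← LinearEquiv.coe_coe, he]; rfl
      rw [h1, show πL v = π v from rfl, hπv, map_zero, map_zero]
    exact hv0 (e.injective this)

/-- Any tensor decomposes with `∏_{i<n} pᵢ` rank-one terms. -/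
lemma exists_decomp_prod {n : ℕ} (p : Fin (n + 1) → ℕ)
    (T : (∀ i, Fin (p i)) → ℝ) :
    ∃ a : Fin (∏ i : Fin n, p i.castSucc) → ∀ i, Fin (p i) → ℝ,
      T = ∑ h, rankOneTensor p (a h) := by
  classical
  set K' := ∀ i : Fin n, Fin (p i.castSucc) with hK'
  have hcard : Fintype.card K' = ∏ i : Fin n, p i.castSucc := by
    simp [hK', Fintype.card_pi]
  let e : Fin (∏ i : Fin n, p i.castSucc) ≃ K' :=
    (Fintype.equivFinOfCardEq hcard).symm
  let A : K' → ∀ i, Fin (p i) → ℝ := fun k' =>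
    Fin.lastCases (motive := fun i => Fin (p i) → ℝ)
      (fun x => T (Fin.lastCases (motive := fun i => Fin (p i)) x k'))
      (fun i' m => if m = k' i' then 1 else 0)
  refine ⟨fun h => A (e h), ?_⟩
  have hsum : ∑ h, rankOneTensor p (A (e h)) = ∑ k' : K', rankOneTensor p (A k') :=
    Equiv.sum_comp e (fun k' => rankOneTensor p (A k'))
  rw [hsum]
  funext k
  rw [Finset.sum_apply]
  have hterm : ∀ k' : K', rankOneTensor p (A k') k =
      (∏ i' : Fin n, (if k i'.castSucc = k' i' then (1:ℝ) else 0)) *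
        T (Fin.lastCases (motive := fun i => Fin (p i)) (k (Fin.last n)) k') := by
    intro k'
    rw [rankOneTensor, Fin.prod_univ_castSucc]
    simp [A]
  simp only [hterm]
  symm
  refine (Fintype.sum_eq_single ((fun i' => k i'.castSucc) : K') ?_).trans ?_
  · intro k' hk'
    obtain ⟨i₀, hi₀⟩ := Function.ne_iff.1 hk'
    have hz : (if k i₀.castSucc = k' i₀ then (1:ℝ) else 0) = 0 := if_neg (Ne.symm hi₀)
    rw [Finset.prod_eq_zero (Finset.mem_univ i₀) hz, zero_mul]
  · have h1 : (Fin.lastCases (motive := fun i => Fin (p i)) (k (Fin.last n))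
        (fun i' => k i'.castSucc)) = k := by
      funext i
      induction i using Fin.lastCases with
      | last => simp
      | cast i' => simp
    rw [h1]
    simp

lemma tensorRank_le_prod {n : ℕ} (p : Fin (n + 1) → ℕ)
    (T : (∀ i, Fin (p i)) → ℝ) :
    tensorRank p T ≤ ∏ i : Fin n, p i.castSucc := by
  obtain ⟨a, ha⟩ := exists_decomp_prod p T
  exact Nat.sInf_le ⟨a, ha⟩

/-- Vector with a `1` in coordinate `j` and the entries `c` in the remaining coordinates. -/
def nvec {m : ℕ} (j : Fin m) (c : Fin (m - 1) → ℝ) : Fin m → ℝ :=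
  fun k => if h : (k : ℕ) = (j : ℕ) then 1
    else c ⟨if (k : ℕ) < (j : ℕ) then (k : ℕ) else (k : ℕ) - 1, by
      have hk := k.isLt; have hj := j.isLt; split <;> omega⟩

lemma nvec_eq {m : ℕ} (j : Fin m) (w : Fin m → ℝ) (hw : w j = 1) :
    ∃ c : Fin (m - 1) → ℝ, nvec j c = w := by
  refine ⟨fun t => w ⟨if (t : ℕ) < (j : ℕ) then (t : ℕ) else (t : ℕ) + 1, by
    have ht := t.isLt; have hj := j.isLt; split <;> omega⟩, ?_⟩
  funext k
  unfold nvec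
  split
  · next h => rw [show k = j from Fin.ext h] at *; exact hw.symm
  · next h =>
    show w _ = w k
    congr 1
    apply Fin.ext
    show (if (if (k:ℕ) < (j:ℕ) then (k:ℕ) else (k:ℕ) - 1) < (j:ℕ)
        then (if (k:ℕ) < (j:ℕ) then (k:ℕ) else (k:ℕ) - 1)
        else (if (k:ℕ) < (j:ℕ) then (k:ℕ) else (k:ℕ) - 1) + 1) = (k:ℕ)
    have hk := k.isLt; have hj := j.isLt
    split_ifs <;> omega

/-- The chart parametrizing (a superset of) rank-`≤ r` tensors with normalized factors. -/
def chartMap {n : ℕ} (p : Fin (n + 1) → ℕ) (r : ℕ)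
    (j : Fin r → ∀ i' : Fin n, Fin (p i'.castSucc))
    (x : Fin r → ((∀ i' : Fin n, (Fin (p i'.castSucc - 1) → ℝ)) × (Fin (p (Fin.last n)) → ℝ))) :
    (∀ i, Fin (p i)) → ℝ :=
  fun k => ∑ h : Fin r,
    (∏ i' : Fin n, nvec (j h i') ((x h).1 i') (k i'.castSucc)) * (x h).2 (k (Fin.last n))

lemma contDiff_chartMap {n : ℕ} (p : Fin (n + 1) → ℕ) (r : ℕ)
    (j : Fin r → ∀ i' : Fin n, Fin (p i'.castSucc)) :
    ContDiff ℝ 1 (chartMap p r j) := by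
  rw [contDiff_pi]
  intro k
  simp only [chartMap]
  apply ContDiff.sum
  intro h _
  have e1 : ContDiff ℝ 1 (fun y : Fin r →
      ((∀ i' : Fin n, (Fin (p i'.castSucc - 1) → ℝ)) × (Fin (p (Fin.last n)) → ℝ)) =>
      y h) := contDiff_pi.1 contDiff_id h
  apply ContDiff.mul
  · apply contDiff_prod
    intro i' _
    have e3 := contDiff_pi.1 (contDiff_pi.1 e1.fst i')
    unfold nvec
    split_ifs <;> first | exact contDiff_const | exact e3 _
  · exact contDiff_pi.1 e1.snd (k (Fin.last n))

/-- Any rank-one term can be realized within some chart. -/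
lemma cover_term {n : ℕ} (p : Fin (n + 1) → ℕ) (hp : ∀ i' : Fin n, 1 ≤ p i'.castSucc)
    (v : ∀ i : Fin (n + 1), Fin (p i) → ℝ) :
    ∃ (jh : ∀ i' : Fin n, Fin (p i'.castSucc))
      (ch : ∀ i' : Fin n, Fin (p i'.castSucc - 1) → ℝ)
      (bh : Fin (p (Fin.last n)) → ℝ),
      ∀ k : ∀ i, Fin (p i),
        (∏ i' : Fin n, nvec (jh i') (ch i') (k i'.castSucc)) * bh (k (Fin.last n))
          = ∏ i, v i (k i) := by
  classical
  by_cases hA : ∀ i' : Fin n, ∃ m, v i'.castSucc m ≠ 0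
  · choose jh hjh using hA
    have hmem : ∀ i', ∃ c, nvec (jh i') c
        = fun m => v i'.castSucc m / v i'.castSucc (jh i') := fun i' =>
      nvec_eq _ _ (div_self (hjh i'))
    choose ch hch using hmem
    refine ⟨jh, ch, fun x => (∏ i' : Fin n, v i'.castSucc (jh i')) * v (Fin.last n) x, ?_⟩
    intro k
    rw [Fin.prod_univ_castSucc (f := fun i => v i (k i))]
    simp only [hch]
    rw [Finset.prod_div_distrib]
    have hne : (∏ i' : Fin n, v i'.castSucc (jh i')) ≠ 0 :=
      Finset.prod_ne_zero_iff.2 fun i' _ => hjh i'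
    field_simp
  · push_neg at hA
    obtain ⟨i₀, hi₀⟩ := hA
    refine ⟨fun i' => ⟨0, by have := hp i'; omega⟩, fun _ => 0, 0, ?_⟩
    intro k
    rw [Pi.zero_apply, mul_zero]
    symm
    exact Finset.prod_eq_zero (Finset.mem_univ i₀.castSucc) (hi₀ (k i₀.castSucc))

theorem typical_last_dim_implies_perfect_range
    {n : ℕ} (hn : 2 ≤ n) (p : Fin (n + 1) → ℕ)
    (hp2 : 2 ≤ p 0) (hmono : Monotone p)
    (ht : IsTypicalRank p (p (Fin.last n))) :
    (∏ i : Fin n, (p i.castSucc : ℤ)) - (∑ i : Fin n, (p i.castSucc : ℤ)) + n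
        ≤ (p (Fin.last n) : ℤ) ∧
      (p (Fin.last n) : ℤ) ≤ ∏ i : Fin n, (p i.castSucc : ℤ) := by
  classical
  set r := p (Fin.last n) with hr
  have hp' : ∀ i : Fin (n + 1), 2 ≤ p i := fun i => le_trans hp2 (hmono (Fin.zero_le i))
  have hrpos : 0 < r := lt_of_lt_of_le (by norm_num) (hp' _)
  -- upper bound
  have hub : r ≤ ∏ i : Fin n, p i.castSucc := by
    by_contra hgt
    push_neg at hgt
    have hempty : {T : (∀ i, Fin (p i)) → ℝ | tensorRank p T = r} = ∅ := by
      ext T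
      simp only [Set.mem_setOf_eq, Set.mem_empty_iff_false, iff_false]
      intro hT
      have := tensorRank_le_prod p T
      omega
    rw [IsTypicalRank, hempty] at ht
    simp at ht
  have hubZ : (r : ℤ) ≤ ∏ i : Fin n, (p i.castSucc : ℤ) := by
    have := Nat.cast_le (α := ℤ) |>.2 hub
    push_cast at this
    exact this
  refine ⟨?_, hubZ⟩
  -- lower bound, by contradiction
  by_contra hlb
  push_neg at hlb
  -- the set of rank-r tensors is covered by the charts
  have hcover : {T : (∀ i, Fin (p i)) → ℝ | tensorRank p T = r} ⊆
      ⋃ j : Fin r → ∀ i' : Fin n, Fin (p i'.castSucc), Set.range (chartMap p r j) := by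
    intro T hT
    have hne : {m | ∃ a : Fin m → ∀ i, Fin (p i) → ℝ,
        T = ∑ h, rankOneTensor p (a h)}.Nonempty :=
      ⟨∏ i : Fin n, p i.castSucc, exists_decomp_prod p T⟩
    have hm : tensorRank p T ∈ {m | ∃ a : Fin m → ∀ i, Fin (p i) → ℝ,
        T = ∑ h, rankOneTensor p (a h)} := Nat.sInf_mem hne
    rw [Set.mem_setOf_eq] at hT
    rw [hT] at hm
    obtain ⟨a, ha⟩ := hm
    have hct := fun h : Fin r => cover_term p (fun i' => by have := hp' i'.castSucc; omega) (a h)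
    choose jh ch bh hkey using hct
    refine Set.mem_iUnion.2 ⟨jh, ⟨fun h => (ch h, bh h), ?_⟩⟩
    funext k
    simp only [chartMap]
    rw [ha, Finset.sum_apply]
    exact Finset.sum_congr rfl fun h _ => hkey h k
  -- each chart has null range
  have hnull : volume (⋃ j : Fin r → ∀ i' : Fin n, Fin (p i'.castSucc),
      Set.range (chartMap p r j)) = 0 := by
    apply measure_iUnion_null
    intro j
    apply null_range_of_contDiff ?_ (contDiff_chartMap p r j)
    -- dimension count
    have hfr : Module.finrank ℝ (Fin r →
        ((∀ i' : Fin n, (Fin (p i'.castSucc - 1) → ℝ)) × (Fin (p (Fin.last n)) → ℝ)))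
        = r * ((∑ i' : Fin n, (p i'.castSucc - 1)) + r) := by
      simp [Module.finrank_pi_fintype, Module.finrank_prod, Module.finrank_pi,
        Fintype.card_fin, Finset.sum_add_distrib, Finset.mul_sum, ← hr]
    have hcard : Fintype.card (∀ i : Fin (n + 1), Fin (p i)) = ∏ i : Fin (n + 1), p i := by
      simp [Fintype.card_pi]
    rw [hfr, hcard]
    -- pass to ℤ
    have hcast : ((∑ i' : Fin n, (p i'.castSucc - 1) : ℕ) : ℤ)
        = (∑ i' : Fin n, (p i'.castSucc : ℤ)) - n := by
      rw [Nat.cast_sum]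
      rw [Finset.sum_congr rfl (fun i' _ => Nat.cast_sub (by have := hp' i'.castSucc; omega))]
      rw [Finset.sum_sub_distrib]
      simp
    have hprod : ((∏ i : Fin (n + 1), p i : ℕ) : ℤ)
        = (∏ i : Fin n, (p i.castSucc : ℤ)) * r := by
      push_cast
      rw [Fin.prod_univ_castSucc]
    have hZ : (r : ℤ) * (((∑ i' : Fin n, (p i'.castSucc : ℤ)) - n) + r)
        < (∏ i : Fin n, (p i.castSucc : ℤ)) * r := by
      have h1 : ((∑ i' : Fin n, (p i'.castSucc : ℤ)) - n) + r
          < ∏ i : Fin n, (p i.castSucc : ℤ) := by linarith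
      have h2 : (0 : ℤ) < r := by exact_mod_cast hrpos
      nlinarith
    have : ((r * ((∑ i' : Fin n, (p i'.castSucc - 1)) + r) : ℕ) : ℤ)
        < ((∏ i : Fin (n + 1), p i : ℕ) : ℤ) := by
      rw [hprod, Nat.cast_mul, Nat.cast_add, hcast]
      exact hZ
    exact_mod_cast this
  exact absurd (measure_mono_null hcover hnull) (ne_of_gt ht)

end
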